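/- Let V be a real vector space of dimension 4n and Ω a complex-valued alternating 2-form on V whose ℂ-bilinear extension to V ⊗ ℂ satisfies Ω^{n+1} = 0 and Ω^n ∧ conj(Ω)^n ≠ 0. Then the kernel W := ker Ω ⊂ V ⊗ ℂ has complex dimension 2n and satisfies W ⊕ conj(W) = V ⊗ ℂ; in particular W ∩ V = 0, so W determines an almost complex structure on V. -/

import Mathlib

open TensorProduct

/-- The `k`-th wedge power of a 2-form, written out (up to a nonzero normalization
constant) as a sum over permutations; expressed as a plain function. -/
noncomputable def formPow {W : Type*} (Ω : W → W → ℂ) (k : ℕ) :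
    (Fin (2 * k) → W) → ℂ :=
  fun v => ∑ σ : Equiv.Perm (Fin (2 * k)),
    ((Equiv.Perm.sign σ : ℤ) : ℂ) *
      ∏ i : Fin k,
        Ω (v (σ ⟨2 * i.1, by have := i.2; omega⟩))
          (v (σ ⟨2 * i.1 + 1, by have := i.2; omega⟩))

/-- The wedge product of an `a`-form and a `b`-form (up to a nonzero normalization
constant), expressed as a plain function. -/
noncomputable def wedgeFun {W : Type*} {a b : ℕ}
    (α : (Fin a → W) → ℂ) (β : (Fin b → W) → ℂ) : (Fin (a + b) → W) → ℂ :=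
  fun v => ∑ σ : Equiv.Perm (Fin (a + b)),
    ((Equiv.Perm.sign σ : ℤ) : ℂ) *
      (α (fun i => v (σ (Fin.castAdd b i))) * β (fun j => v (σ (Fin.natAdd a j))))

namespace CSympAux

variable {M : Type*} [AddCommGroup M] [Module ℂ M]

/-- The equivalence `Fin k × Fin 2 ≃ Fin (2*k)` sending `(i,r)` to `2*i+r`. -/
def pairEquiv (k : ℕ) : Fin k × Fin 2 ≃ Fin (2 * k) where
  toFun p := ⟨2 * p.1.1 + p.2.1, by have h1 := p.1.2; have h2 := p.2.2; omega⟩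
  invFun m := (⟨m.1 / 2, by have := m.2; omega⟩, ⟨m.1 % 2, by omega⟩)
  left_inv p := by
    obtain ⟨⟨i, hi⟩, ⟨r, hr⟩⟩ := p
    have h1 : (2 * i + r) / 2 = i := by omega
    have h2 : (2 * i + r) % 2 = r := by omega
    exact Prod.ext (Fin.ext h1) (Fin.ext h2)
  right_inv m := Fin.ext (by have := m.2; simp; omega)

lemma pairEquiv_mk0 {k : ℕ} (i : Fin k) (h : 2 * i.1 < 2 * k) :
    (⟨2 * i.1, h⟩ : Fin (2 * k)) = pairEquiv k (i, 0) :=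
  Fin.ext (by simp [pairEquiv])

lemma pairEquiv_mk1 {k : ℕ} (i : Fin k) (h : 2 * i.1 + 1 < 2 * k) :
    (⟨2 * i.1 + 1, h⟩ : Fin (2 * k)) = pairEquiv k (i, 1) :=
  Fin.ext (by simp [pairEquiv])

/-- The product of `B (v (2i)) (v (2i+1))` as a multilinear map. -/
noncomputable def pairMl (B : M →ₗ[ℂ] M →ₗ[ℂ] ℂ) (k : ℕ) :
    MultilinearMap ℂ (fun _ : Fin (2 * k) => M) ℂ where
  toFun v := ∏ i : Fin k, B (v (pairEquiv k (i, 0))) (v (pairEquiv k (i, 1)))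
  map_update_add' := by
    intro dec v j x y
    obtain ⟨⟨i₀, r⟩, rfl⟩ : ∃ p, pairEquiv k p = j :=
      ⟨(pairEquiv k).symm j, (pairEquiv k).apply_symm_apply j⟩
    have hne01 : pairEquiv k (i₀, 1) ≠ pairEquiv k (i₀, 0) :=
      (pairEquiv k).injective.ne (by simp)
    have hne10 : pairEquiv k (i₀, 0) ≠ pairEquiv k (i₀, 1) :=
      (pairEquiv k).injective.ne (by simp)
    have split : ∀ z : M,
        (∏ i : Fin k, B (Function.update v (pairEquiv k (i₀, r)) z (pairEquiv k (i, 0)))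
          (Function.update v (pairEquiv k (i₀, r)) z (pairEquiv k (i, 1))))
        = B (Function.update v (pairEquiv k (i₀, r)) z (pairEquiv k (i₀, 0)))
            (Function.update v (pairEquiv k (i₀, r)) z (pairEquiv k (i₀, 1))) *
          ∏ i ∈ Finset.univ.erase i₀, B (v (pairEquiv k (i, 0))) (v (pairEquiv k (i, 1))) := by
      intro z
      rw [← Finset.mul_prod_erase Finset.univ _ (Finset.mem_univ i₀)]
      congr 1
      refine Finset.prod_congr rfl fun i hi => ?_
      have hne := Finset.ne_of_mem_erase hi
      rw [Function.update_of_ne ((pairEquiv k).injective.ne (fun h => hne (congrArg Prod.fst h))),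
        Function.update_of_ne ((pairEquiv k).injective.ne (fun h => hne (congrArg Prod.fst h)))]
    rw [split, split, split]
    fin_cases r
    · simp only [Fin.zero_eta]
      rw [Function.update_self, Function.update_self, Function.update_self,
        Function.update_of_ne hne01, Function.update_of_ne hne01, Function.update_of_ne hne01,
        map_add, LinearMap.add_apply, add_mul]
    · simp only [Fin.mk_one]
      rw [Function.update_self, Function.update_self, Function.update_self,
        Function.update_of_ne hne10, Function.update_of_ne hne10, Function.update_of_ne hne10,
        map_add, add_mul]
  map_update_smul' := by
    intro dec v j c x
    obtain ⟨⟨i₀, r⟩, rfl⟩ : ∃ p, pairEquiv k p = j :=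
      ⟨(pairEquiv k).symm j, (pairEquiv k).apply_symm_apply j⟩
    have hne01 : pairEquiv k (i₀, 1) ≠ pairEquiv k (i₀, 0) :=
      (pairEquiv k).injective.ne (by simp)
    have hne10 : pairEquiv k (i₀, 0) ≠ pairEquiv k (i₀, 1) :=
      (pairEquiv k).injective.ne (by simp)
    have split : ∀ z : M,
        (∏ i : Fin k, B (Function.update v (pairEquiv k (i₀, r)) z (pairEquiv k (i, 0)))
          (Function.update v (pairEquiv k (i₀, r)) z (pairEquiv k (i, 1))))
        = B (Function.update v (pairEquiv k (i₀, r)) z (pairEquiv k (i₀, 0)))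
            (Function.update v (pairEquiv k (i₀, r)) z (pairEquiv k (i₀, 1))) *
          ∏ i ∈ Finset.univ.erase i₀, B (v (pairEquiv k (i, 0))) (v (pairEquiv k (i, 1))) := by
      intro z
      rw [← Finset.mul_prod_erase Finset.univ _ (Finset.mem_univ i₀)]
      congr 1
      refine Finset.prod_congr rfl fun i hi => ?_
      have hne := Finset.ne_of_mem_erase hi
      rw [Function.update_of_ne ((pairEquiv k).injective.ne (fun h => hne (congrArg Prod.fst h))),
        Function.update_of_ne ((pairEquiv k).injective.ne (fun h => hne (congrArg Prod.fst h)))]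
    rw [split, split]
    fin_cases r
    · simp only [Fin.zero_eta]
      rw [Function.update_self, Function.update_self,
        Function.update_of_ne hne01, Function.update_of_ne hne01,
        map_smul, LinearMap.smul_apply, smul_mul_assoc]
    · simp only [Fin.mk_one]
      rw [Function.update_self, Function.update_self,
        Function.update_of_ne hne10, Function.update_of_ne hne10,
        map_smul, smul_mul_assoc]

lemma formPow_eq (B : M →ₗ[ℂ] M →ₗ[ℂ] ℂ) (k : ℕ) :
    formPow (fun u v => B u v) k = ⇑(MultilinearMap.alternatization (pairMl B k)) := by
  funext v
  rw [MultilinearMap.alternatization_apply]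
  simp only [formPow]
  refine Finset.sum_congr rfl fun σ _ => ?_
  rw [MultilinearMap.domDomCongr_apply, Units.smul_def, zsmul_eq_mul]
  congr 1

lemma formPow_eq_zero (B : M →ₗ[ℂ] M →ₗ[ℂ] ℂ) (k : ℕ) {w : M}
    (hw1 : ∀ z, B w z = 0) (hw2 : ∀ z, B z w = 0)
    (v : Fin (2 * k) → M) (t : Fin (2 * k)) (hv : v t = w) :
    formPow (fun u v => B u v) k v = 0 := by
  simp only [formPow]
  refine Finset.sum_eq_zero fun σ _ => ?_
  refine mul_eq_zero_of_right _ ?_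
  have hm : σ (σ⁻¹ t) = t := Equiv.apply_symm_apply σ t
  set m := σ⁻¹ t with hmdef
  have hm2 : m.1 < 2 * k := m.2
  refine Finset.prod_eq_zero (Finset.mem_univ (⟨m.1 / 2, by omega⟩ : Fin k)) ?_
  rcases Nat.even_or_odd m.1 with he | ho
  · obtain ⟨c, hc⟩ := he
    have h1 : (⟨2 * (⟨m.1 / 2, by omega⟩ : Fin k).1,
        by have := (⟨m.1 / 2, by omega⟩ : Fin k).2; omega⟩ : Fin (2 * k)) = m :=
      Fin.ext (by simp; omega)
    rw [h1, hm, hv, hw1]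
  · obtain ⟨c, hc⟩ := ho
    have h1 : (⟨2 * (⟨m.1 / 2, by omega⟩ : Fin k).1 + 1,
        by have := (⟨m.1 / 2, by omega⟩ : Fin k).2; omega⟩ : Fin (2 * k)) = m :=
      Fin.ext (by simp; omega)
    rw [h1, hm, hv, hw2]

/-- Wedge (product over disjoint slots) of two multilinear maps. -/
noncomputable def wedgeMl {a b : ℕ} (F : MultilinearMap ℂ (fun _ : Fin a => M) ℂ)
    (G : MultilinearMap ℂ (fun _ : Fin b => M) ℂ) :
    MultilinearMap ℂ (fun _ : Fin (a + b) => M) ℂ :=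
  ((TensorProduct.lid ℂ ℂ).toLinearMap.compMultilinearMap (F.domCoprod G)).domDomCongr
    finSumFinEquiv

lemma wedgeMl_apply {a b : ℕ} (F : MultilinearMap ℂ (fun _ : Fin a => M) ℂ)
    (G : MultilinearMap ℂ (fun _ : Fin b => M) ℂ) (u : Fin (a + b) → M) :
    wedgeMl F G u = F (fun i => u (Fin.castAdd b i)) * G (fun j => u (Fin.natAdd a j)) := by
  simp [wedgeMl, MultilinearMap.domDomCongr_apply, LinearMap.compMultilinearMap_apply,
    MultilinearMap.domCoprod_apply, TensorProduct.lid_tmul, smul_eq_mul, Function.comp]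

lemma wedgeFun_eq {a b : ℕ} (F : MultilinearMap ℂ (fun _ : Fin a => M) ℂ)
    (G : MultilinearMap ℂ (fun _ : Fin b => M) ℂ) :
    wedgeFun ⇑F ⇑G = ⇑(MultilinearMap.alternatization (wedgeMl F G)) := by
  funext v
  rw [MultilinearMap.alternatization_apply]
  simp only [wedgeFun]
  refine Finset.sum_congr rfl fun σ _ => ?_
  rw [MultilinearMap.domDomCongr_apply, wedgeMl_apply, Units.smul_def, zsmul_eq_mul]

lemma wedge_vanish {a b : ℕ} (F : MultilinearMap ℂ (fun _ : Fin a => M) ℂ)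
    (G : MultilinearMap ℂ (fun _ : Fin b => M) ℂ) {w : M}
    (hF : ∀ (v : Fin a → M) (t : Fin a), v t = w → F v = 0)
    (hG : ∀ (v : Fin b → M) (t : Fin b), v t = w → G v = 0)
    (v : Fin (a + b) → M) (t : Fin (a + b)) (hv : v t = w) :
    (MultilinearMap.alternatization (wedgeMl F G)) v = 0 := by
  rw [MultilinearMap.alternatization_apply]
  refine Finset.sum_eq_zero fun σ _ => ?_
  rw [MultilinearMap.domDomCongr_apply, wedgeMl_apply]
  have hm : σ (σ⁻¹ t) = t := Equiv.apply_symm_apply σ t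
  set m := σ⁻¹ t with hmdef
  rcases lt_or_ge m.1 a with hlt | hge
  · have h1 : Fin.castAdd b (⟨m.1, hlt⟩ : Fin a) = m := Fin.ext rfl
    rw [hF (fun i => v (σ (Fin.castAdd b i))) ⟨m.1, hlt⟩ (by show v (σ (Fin.castAdd b ⟨m.1, hlt⟩)) = w; rw [h1, hm, hv]), zero_mul,
      smul_zero]
  · have hmlt : m.1 - a < b := by have := m.2; omega
    have h1 : Fin.natAdd a (⟨m.1 - a, hmlt⟩ : Fin b) = m := Fin.ext (by simp; omega)
    rw [hG (fun j => v (σ (Fin.natAdd a j))) ⟨m.1 - a, hmlt⟩ (by show v (σ (Fin.natAdd a ⟨m.1 - a, hmlt⟩)) = w; rw [h1, hm, hv]), mul_zero,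
      smul_zero]

lemma alternating_eq_zero [FiniteDimensional ℂ M] (N : ℕ) (hN : Module.finrank ℂ M = N)
    (f : M [⋀^Fin N]→ₗ[ℂ] ℂ) {w : M} (hw : w ≠ 0)
    (hf : ∀ (v : Fin N → M) (t : Fin N), v t = w → f v = 0) : f = 0 := by
  have li : LinearIndepOn ℂ id ({w} : Set M) :=
    (linearIndepOn_singleton_iff (R := ℂ) (v := id)).mpr hw
  let b0 := Module.Basis.extend li
  have hwmem : w ∈ li.extend (Set.subset_univ ({w} : Set M)) :=
    li.subset_extend _ rfl
  let e := b0.indexEquiv (Module.finBasisOfFinrankEq ℂ M hN)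
  let b := b0.reindex e
  have hb : f ⇑b = 0 := by
    refine hf ⇑b (e ⟨w, hwmem⟩) ?_
    simp only [b, Module.Basis.reindex_apply, Equiv.symm_apply_apply]
    exact Module.Basis.extend_apply_self li _
  rw [f.eq_smul_basis_det b, hb, zero_smul]

lemma exists_sympFamily [FiniteDimensional ℂ M] (B : M →ₗ[ℂ] M →ₗ[ℂ] ℂ)
    (hB : ∀ u, B u u = 0) (k : ℕ)
    (hk : Module.finrank ℂ (LinearMap.ker B) + 2 * k ≤ Module.finrank ℂ M + 1) :
    ∃ e f : Fin k → M,
      (∀ i j, B (e i) (f j) = if i = j then 1 else 0) ∧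
      (∀ i j, B (e i) (e j) = 0) ∧
      (∀ i j, B (f i) (f j) = 0) := by
  have skew : ∀ u v, B u v = - B v u := by
    intro u v
    have h := hB (u + v)
    simp only [map_add, LinearMap.add_apply, hB] at h
    linear_combination h
  induction k with
  | zero => exact ⟨Fin.elim0, Fin.elim0, fun i => i.elim0, fun i => i.elim0, fun i => i.elim0⟩
  | succ k ih =>
    obtain ⟨e, f, hef, hee, hff⟩ := ih (by omega)
    have hfe : ∀ i j, B (f i) (e j) = if j = i then -1 else 0 := by
      intro i j
      rw [skew, hef]
      split_ifs <;> norm_num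
    set φ : M →ₗ[ℂ] (Fin k → ℂ) × (Fin k → ℂ) :=
      (LinearMap.pi fun i => B (e i)).prod (LinearMap.pi fun i => B (f i)) with hφ
    have hmemC : ∀ x, x ∈ LinearMap.ker φ ↔ ((∀ i, B (e i) x = 0) ∧ ∀ i, B (f i) x = 0) := by
      intro x
      simp [hφ, LinearMap.mem_ker, LinearMap.prod_apply, LinearMap.pi_apply, Prod.ext_iff,
        funext_iff]
    have hrank : Module.finrank ℂ M ≤ Module.finrank ℂ (LinearMap.ker φ) + 2 * k := by
      have h1 := LinearMap.finrank_range_add_finrank_ker φ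
      have h2 : Module.finrank ℂ ((Fin k → ℂ) × (Fin k → ℂ)) = 2 * k := by
        rw [Module.finrank_prod, Module.finrank_pi]
        simp only [Fintype.card_fin]
        omega
      have h3 := Submodule.finrank_le (LinearMap.range φ)
      omega
    have hnotle : ¬ LinearMap.ker φ ≤ LinearMap.ker B := by
      intro hle
      have := Submodule.finrank_mono hle
      omega
    obtain ⟨u, huC, huB⟩ := SetLike.not_le_iff_exists.mp hnotle
    obtain ⟨hue, huf⟩ := (hmemC u).mp huC
    have hue' : ∀ i, B u (e i) = 0 := fun i => by rw [skew, hue i, neg_zero]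
    have huf' : ∀ i, B u (f i) = 0 := fun i => by rw [skew, huf i, neg_zero]
    obtain ⟨z, hz⟩ : ∃ z, B u z ≠ 0 := by
      by_contra h
      push_neg at h
      exact huB (LinearMap.mem_ker.mpr (LinearMap.ext h))
    set s : M := (∑ i, B (e i) z • f i) - ∑ i, B (f i) z • e i with hs
    set c : M := z - s with hc
    have hBc_e : ∀ j, B (e j) c = 0 := by
      intro j
      have h1 : B (e j) s = B (e j) z := by
        simp [hs, map_sub, map_sum, map_smul, smul_eq_mul, hef, hee, mul_ite,
          Finset.sum_ite_eq]
      simp [hc, map_sub, h1]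
    have hBc_f : ∀ j, B (f j) c = 0 := by
      intro j
      have h1 : B (f j) s = B (f j) z := by
        simp [hs, map_sub, map_sum, map_smul, smul_eq_mul, hff, hfe, mul_ite,
          Finset.sum_ite_eq']
      simp [hc, map_sub, h1]
    have hBuc : B u c = B u z := by
      have h1 : B u s = 0 := by
        simp [hs, map_sub, map_sum, map_smul, smul_eq_mul, hue', huf']
      simp [hc, map_sub, h1]
    set a : ℂ := B u c with ha
    have ha0 : a ≠ 0 := by rw [hBuc]; exact hz
    have h1 : B u (a⁻¹ • c) = 1 := by
      rw [map_smul, smul_eq_mul, ← ha, inv_mul_cancel₀ ha0]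
    have h3 : ∀ i, B (e i) (a⁻¹ • c) = 0 := fun i => by rw [map_smul, hBc_e i, smul_zero]
    have h6 : ∀ i, B (f i) (a⁻¹ • c) = 0 := fun i => by rw [map_smul, hBc_f i, smul_zero]
    have h7 : ∀ j, B (a⁻¹ • c) (f j) = 0 := fun j => by rw [skew, h6 j, neg_zero]
    have h7e : ∀ j, B (a⁻¹ • c) (e j) = 0 := fun j => by rw [skew, h3 j, neg_zero]
    have h8 : B (a⁻¹ • c) (a⁻¹ • c) = 0 := hB _
    refine ⟨Fin.snoc e u, Fin.snoc f (a⁻¹ • c), ?_, ?_, ?_⟩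
    · intro i j
      induction i using Fin.lastCases with
      | last =>
        induction j using Fin.lastCases with
        | last => rw [Fin.snoc_last, Fin.snoc_last, h1, if_pos rfl]
        | cast j =>
          rw [Fin.snoc_last, Fin.snoc_castSucc, huf' j,
            if_neg (Fin.castSucc_lt_last j).ne']
      | cast i =>
        induction j using Fin.lastCases with
        | last =>
          rw [Fin.snoc_castSucc, Fin.snoc_last, h3 i, if_neg (Fin.castSucc_lt_last i).ne]
        | cast j =>
          rw [Fin.snoc_castSucc, Fin.snoc_castSucc, hef i j]
          simp [Fin.castSucc_inj]
    · intro i j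
      induction i using Fin.lastCases with
      | last =>
        induction j using Fin.lastCases with
        | last => rw [Fin.snoc_last]; exact hB u
        | cast j => rw [Fin.snoc_last, Fin.snoc_castSucc]; exact hue' j
      | cast i =>
        induction j using Fin.lastCases with
        | last => rw [Fin.snoc_castSucc, Fin.snoc_last]; exact hue i
        | cast j => rw [Fin.snoc_castSucc, Fin.snoc_castSucc]; exact hee i j
    · intro i j
      induction i using Fin.lastCases with
      | last =>
        induction j using Fin.lastCases with
        | last => rw [Fin.snoc_last]; exact h8
        | cast j => rw [Fin.snoc_last, Fin.snoc_castSucc]; exact h7 j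
      | cast i =>
        induction j using Fin.lastCases with
        | last => rw [Fin.snoc_castSucc, Fin.snoc_last]; exact h6 i
        | cast j => rw [Fin.snoc_castSucc, Fin.snoc_castSucc]; exact hff i j

lemma fin2_cases : ∀ r : Fin 2, r = 0 ∨ r = 1 := by decide

lemma perm2_cases : ∀ τ : Equiv.Perm (Fin 2), τ = 1 ∨ τ = Equiv.swap 0 1 := by decide

lemma formPow_sympFamily_ne_zero (B : M →ₗ[ℂ] M →ₗ[ℂ] ℂ) (N : ℕ)
    (e f : Fin N → M)
    (hef : ∀ i j, B (e i) (f j) = if i = j then 1 else 0)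
    (hfe : ∀ i j, B (f i) (e j) = if i = j then -1 else 0)
    (hee : ∀ i j, B (e i) (e j) = 0)
    (hff : ∀ i j, B (f i) (f j) = 0) :
    ∃ g : Fin (2 * N) → M, formPow (fun u v => B u v) N g ≠ 0 := by
  classical
  set h : Fin N × Fin 2 → M := fun p => if p.2 = 0 then e p.1 else f p.1 with hh
  set g : Fin (2 * N) → M := fun m => h ((pairEquiv N).symm m) with hgdef
  refine ⟨g, ?_⟩
  have hgp : ∀ p, g (pairEquiv N p) = h p := fun p => by
    rw [hgdef]
    simp only [Equiv.symm_apply_apply]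
  have hcross : ∀ p q : Fin N × Fin 2, p.1 ≠ q.1 → B (h p) (h q) = 0 := by
    rintro ⟨j, r⟩ ⟨j', r'⟩ hne
    by_cases hr : r = 0 <;> by_cases hr' : r' = 0 <;>
      simp only [hh, hr, hr', if_pos, if_neg, ite_true, ite_false] <;>
      simp [hef, hee, hff, hfe, hne]
  -- the block permutations
  set D := (Fin N → Equiv.Perm (Fin 2)) × Equiv.Perm (Fin N) with hD
  set Φ : D → Equiv.Perm (Fin (2 * N)) := fun p =>
    (((pairEquiv N).symm.trans
      ((Equiv.prodCongrRight p.1).trans (Equiv.prodCongrLeft fun _ : Fin 2 => p.2))).trans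
      (pairEquiv N)) with hΦ
  have hΦapp : ∀ (s : Fin N → Equiv.Perm (Fin 2)) (π : Equiv.Perm (Fin N)) (p : Fin N × Fin 2),
      Φ (s, π) (pairEquiv N p) = pairEquiv N (π p.1, s p.1 p.2) := by
    rintro s π ⟨i, r⟩
    simp [hΦ, Equiv.trans_apply, Equiv.symm_apply_apply]
  have hsign : ∀ (s : Fin N → Equiv.Perm (Fin 2)) (π : Equiv.Perm (Fin N)),
      Equiv.Perm.sign (Φ (s, π)) = ∏ i, Equiv.Perm.sign (s i) := by
    intro s π
    rw [hΦ]
    rw [Equiv.Perm.sign_symm_trans_trans]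
    have h2 : ((Equiv.prodCongrRight s).trans (Equiv.prodCongrLeft fun _ : Fin 2 => π))
        = (Equiv.prodCongrLeft fun _ : Fin 2 => π) * (Equiv.prodCongrRight s) := rfl
    rw [h2, map_mul, Equiv.Perm.sign_prodCongrLeft, Equiv.Perm.sign_prodCongrRight]
    rw [Finset.prod_const, Finset.card_univ, Fintype.card_fin, Int.units_sq, one_mul]
  have hΦinj : Function.Injective Φ := by
    rintro ⟨s, π⟩ ⟨s', π'⟩ hEq
    have key : ∀ (i : Fin N) (r : Fin 2), (π i, s i r) = (π' i, s' i r) := by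
      intro i r
      have h := congrArg (fun σ : Equiv.Perm (Fin (2 * N)) => σ (pairEquiv N (i, r))) hEq
      simp only [hΦapp] at h
      exact (pairEquiv N).injective h
    have hπ : π = π' := Equiv.ext fun i => congrArg Prod.fst (key i 0)
    have hs : s = s' := funext fun i => Equiv.ext fun r => congrArg Prod.snd (key i r)
    rw [Prod.mk.injEq]
    exact ⟨hs, hπ⟩
  -- value of a term coming from Φ
  have hterm1 : ∀ (s : Fin N → Equiv.Perm (Fin 2)) (π : Equiv.Perm (Fin N)),
      ((Equiv.Perm.sign (Φ (s, π)) : ℤ) : ℂ) *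
        ∏ i : Fin N, B (g (Φ (s, π) (pairEquiv N (i, 0)))) (g (Φ (s, π) (pairEquiv N (i, 1))))
        = 1 := by
    intro s π
    have hfac : ∀ i : Fin N,
        B (g (Φ (s, π) (pairEquiv N (i, 0)))) (g (Φ (s, π) (pairEquiv N (i, 1))))
          = ((Equiv.Perm.sign (s i) : ℤ) : ℂ) := by
      intro i
      rw [hΦapp, hΦapp, hgp, hgp]
      rcases perm2_cases (s i) with h' | h' <;> rw [h']
      · simp [hh, hef]
      · simp [hh, hfe, Equiv.swap_apply_left, Equiv.swap_apply_right, Equiv.Perm.sign_swap]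
    rw [Finset.prod_congr rfl fun i _ => hfac i, hsign]
    have hcast : ∀ t : ℤˣ, (((t : ℤ) : ℂ) * ((t : ℤ) : ℂ)) = 1 := by
      intro t
      rcases Int.units_eq_one_or t with h' | h' <;> rw [h'] <;> norm_num
    rw [show ((((∏ i, Equiv.Perm.sign (s i) : ℤˣ) : ℤ)) : ℂ)
        = ∏ i, ((Equiv.Perm.sign (s i) : ℤ) : ℂ) by push_cast [Units.coe_prod]; rfl] at *
    rw [← Finset.prod_mul_distrib]
    rw [Finset.prod_congr rfl fun i _ => hcast (Equiv.Perm.sign (s i))]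
    exact Finset.prod_const_one
  -- terms not coming from Φ vanish
  have hterm0 : ∀ σ : Equiv.Perm (Fin (2 * N)), σ ∉ Set.range Φ →
      (∏ i : Fin N, B (g (σ (pairEquiv N (i, 0)))) (g (σ (pairEquiv N (i, 1))))) = 0 := by
    intro σ hσ
    by_contra hne
    apply hσ
    have hfac : ∀ i : Fin N,
        B (g (σ (pairEquiv N (i, 0)))) (g (σ (pairEquiv N (i, 1)))) ≠ 0 :=
      fun i h0 => hne (Finset.prod_eq_zero (Finset.mem_univ i) h0)
    set Ψ : Equiv.Perm (Fin N × Fin 2) :=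
      (((pairEquiv N).trans σ).trans (pairEquiv N).symm : _) with hΨ
    have hΨapp : ∀ p, σ (pairEquiv N p) = pairEquiv N (Ψ p) := by
      intro p
      rw [hΨ]
      simp [Equiv.trans_apply]
    have hblock : ∀ i : Fin N, (Ψ (i, 0)).1 = (Ψ (i, 1)).1 := by
      intro i
      by_contra hne1
      apply hfac i
      rw [hΨapp, hΨapp, hgp, hgp]
      exact hcross _ _ hne1
    have hΨfst : ∀ (i : Fin N) (r : Fin 2), (Ψ (i, r)).1 = (Ψ (i, 0)).1 := by
      intro i r
      rcases fin2_cases r with rfl | rfl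
      · rfl
      · exact (hblock i).symm
    have hπinj : Function.Injective (fun i : Fin N => (Ψ (i, 0)).1) := by
      intro i i' hEq
      by_contra hii
      have hd : (Ψ (i, 0)).2 ≠ (Ψ (i, 1)).2 := by
        intro hsnd
        have h2 : Ψ (i, 0) = Ψ (i, 1) := Prod.ext (hblock i) hsnd
        have := Ψ.injective h2
        simp at this
      have h2 : (Ψ (i', 0)).2 = (Ψ (i, 0)).2 ∨ (Ψ (i', 0)).2 = (Ψ (i, 1)).2 := by
        have hdec : ∀ a b c : Fin 2, a ≠ b → c = a ∨ c = b := by decide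
        exact hdec _ _ _ hd
      rcases h2 with h2 | h2
      · have h3 : Ψ (i', 0) = Ψ (i, 0) := Prod.ext (by exact hEq.symm) h2
        have h4 := Ψ.injective h3
        exact hii (congrArg Prod.fst h4).symm
      · have h3 : Ψ (i', 0) = Ψ (i, 1) := Prod.ext (by rw [← hblock i]; exact hEq.symm) h2
        have h4 := Ψ.injective h3
        have : (0 : Fin 2) = 1 := congrArg Prod.snd h4
        exact absurd this (by decide)
    have hsinj : ∀ i : Fin N, Function.Injective (fun r : Fin 2 => (Ψ (i, r)).2) := by
      intro i r r' hrr
      have h2 : Ψ (i, r) = Ψ (i, r') := Prod.ext (by rw [hΨfst i r, hΨfst i r']) hrr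
      have h3 := Ψ.injective h2
      exact congrArg Prod.snd h3
    refine ⟨(fun i => Equiv.ofBijective _ (Finite.injective_iff_bijective.mp (hsinj i)),
      Equiv.ofBijective _ (Finite.injective_iff_bijective.mp hπinj)), ?_⟩
    apply Equiv.ext
    intro m
    obtain ⟨p, rfl⟩ : ∃ p, pairEquiv N p = m := ⟨(pairEquiv N).symm m, (pairEquiv N).apply_symm_apply m⟩
    rw [hΦapp, hΨapp]
    congr 1
    obtain ⟨i, r⟩ := p
    refine Prod.ext ?_ ?_
    · show (Ψ (i, 0)).1 = (Ψ (i, r)).1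
      exact (hΨfst i r).symm
    · rfl
  -- final computation
  have hsum : formPow (fun u v => B u v) N g = ((Fintype.card D : ℕ) : ℂ) := by
    simp only [formPow]
    simp only [pairEquiv_mk0, pairEquiv_mk1]
    have hzero : ∀ σ ∈ (Finset.univ : Finset (Equiv.Perm (Fin (2 * N)))),
        σ ∉ Finset.image Φ Finset.univ →
        ((Equiv.Perm.sign σ : ℤ) : ℂ) *
          ∏ i : Fin N, B (g (σ (pairEquiv N (i, 0)))) (g (σ (pairEquiv N (i, 1)))) = 0 := by
      intro σ _ hσ
      rw [hterm0 σ (by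
        intro hmem
        exact hσ (by
          obtain ⟨d, hd⟩ := hmem
          exact Finset.mem_image.mpr ⟨d, Finset.mem_univ d, hd⟩)), mul_zero]
    rw [← Finset.sum_subset (Finset.subset_univ _) hzero,
      Finset.sum_image (fun d _ d' _ hdd => hΦinj hdd)]
    have h2 : ∑ d ∈ (Finset.univ : Finset D),
        ((Equiv.Perm.sign (Φ d) : ℤ) : ℂ) *
          ∏ i : Fin N, B (g (Φ d (pairEquiv N (i, 0)))) (g (Φ d (pairEquiv N (i, 1))))
        = ∑ _d ∈ (Finset.univ : Finset D), (1 : ℂ) :=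
      Finset.sum_congr rfl (fun d _ => by obtain ⟨s, π⟩ := d; exact hterm1 s π)
    rw [h2, Finset.sum_const, Finset.card_univ, nsmul_eq_mul, mul_one]
  rw [hsum]
  have : Fintype.card D ≠ 0 := Fintype.card_ne_zero
  exact_mod_cast this

end CSympAux

open CSympAux

set_option maxHeartbeats 2000000

/-- Let `V` be a real vector space of dimension `4n` and `Ω` a
complex-valued alternating 2-form on `V` whose ℂ-bilinear extension `ΩC` to
`V ⊗ ℂ` satisfies `Ω^{n+1} = 0` and `Ω^n ∧ conj(Ω)^n ≠ 0` (a C-symplectic form).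
Then the kernel `W := ker ΩC ⊂ V ⊗ ℂ` has complex dimension `2n` and satisfies
`W ⊕ conj(W) = V ⊗ ℂ`; in particular `W ∩ V = 0`, so `W` determines an almost
complex structure on `V`. -/
theorem c_symplectic_kernel_structure
    (V : Type*) [AddCommGroup V] [Module ℝ V] [FiniteDimensional ℝ V]
    (n : ℕ) (hdim : Module.finrank ℝ V = 4 * n)
    (conj : (ℂ ⊗[ℝ] V) →ₗ[ℝ] (ℂ ⊗[ℝ] V))
    (hconj : conj = TensorProduct.map Complex.conjAe.toLinearMap LinearMap.id)
    (Ω : V →ₗ[ℝ] V →ₗ[ℝ] ℂ)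
    (hAlt : ∀ v : V, Ω v v = 0)
    (ΩC : (ℂ ⊗[ℝ] V) →ₗ[ℂ] (ℂ ⊗[ℝ] V) →ₗ[ℂ] ℂ)
    (hext : ∀ x y : V, ΩC ((1 : ℂ) ⊗ₜ[ℝ] x) ((1 : ℂ) ⊗ₜ[ℝ] y) = Ω x y)
    (hpow : formPow (fun u v => ΩC u v) (n + 1) = 0)
    (hvol : wedgeFun (formPow (fun u v => ΩC u v) n)
        (formPow (fun u v => star (ΩC (conj u) (conj v))) n) ≠ 0) :
    Module.finrank ℂ (LinearMap.ker ΩC) = 2 * n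
    ∧ ((LinearMap.ker ΩC).restrictScalars ℝ) ⊓
        Submodule.map conj ((LinearMap.ker ΩC).restrictScalars ℝ) = ⊥
    ∧ ((LinearMap.ker ΩC).restrictScalars ℝ) ⊔
        Submodule.map conj ((LinearMap.ker ΩC).restrictScalars ℝ) = ⊤
    ∧ (∀ x : V, ((1 : ℂ) ⊗ₜ[ℝ] x) ∈ LinearMap.ker ΩC → x = 0) := by
  classical
  -- basic instances and dimensions
  haveI : FiniteDimensional ℂ (ℂ ⊗[ℝ] V) := inferInstance
  have frC : Module.finrank ℂ (ℂ ⊗[ℝ] V) = 4 * n := by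
    rw [Module.finrank_baseChange, hdim]
  have frR : Module.finrank ℝ (ℂ ⊗[ℝ] V) = 8 * n := by
    have h1 := Module.finrank_mul_finrank ℝ ℂ (ℂ ⊗[ℝ] V)
    rw [Complex.finrank_real_complex, frC] at h1
    omega
  -- conj facts
  have hconj_tmul : ∀ (a : ℂ) (x : V), conj (a ⊗ₜ[ℝ] x) = (starRingEnd ℂ a) ⊗ₜ[ℝ] x := by
    intro a x
    rw [hconj]
    simp [TensorProduct.map_tmul]
  have hconj_smul : ∀ (c : ℂ) (u : ℂ ⊗[ℝ] V), conj (c • u) = (starRingEnd ℂ c) • conj u := by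
    intro c u
    induction u using TensorProduct.induction_on with
    | zero => simp
    | tmul a x =>
      rw [smul_tmul', hconj_tmul, hconj_tmul, smul_tmul']
      simp [smul_eq_mul]
    | add u v hu hv => rw [smul_add, map_add, hu, hv, map_add, smul_add]
  have hconj_conj : ∀ u, conj (conj u) = u := by
    intro u
    induction u using TensorProduct.induction_on with
    | zero => simp
    | tmul a x => rw [hconj_tmul, hconj_tmul]; simp
    | add u v hu hv => rw [map_add, map_add, hu, hv]
  -- skewness of ΩC
  have base : ∀ (a b : ℂ) (x y : V), ΩC (a ⊗ₜ[ℝ] x) (b ⊗ₜ[ℝ] y) = a * b * Ω x y := by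
    intro a b x y
    have h1 : a ⊗ₜ[ℝ] x = a • ((1 : ℂ) ⊗ₜ[ℝ] x) := by rw [smul_tmul']; simp [smul_eq_mul]
    have h2 : b ⊗ₜ[ℝ] y = b • ((1 : ℂ) ⊗ₜ[ℝ] y) := by rw [smul_tmul']; simp [smul_eq_mul]
    rw [h1, h2]
    simp only [map_smul, LinearMap.smul_apply, smul_eq_mul, hext]
    ring
  have skew0 : ∀ u v : ℂ ⊗[ℝ] V, ΩC u v + ΩC v u = 0 := by
    intro u v
    induction u using TensorProduct.induction_on generalizing v with
    | zero => simp
    | add u₁ u₂ h1 h2 =>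
      have := h1 v
      have := h2 v
      simp only [map_add, LinearMap.add_apply]
      linear_combination h1 v + h2 v
    | tmul a x =>
      induction v using TensorProduct.induction_on with
      | zero => simp
      | add v₁ v₂ g1 g2 =>
        simp only [map_add, LinearMap.add_apply]
        linear_combination g1 + g2
      | tmul b y =>
        rw [base, base]
        have h := hAlt (x + y)
        simp only [map_add, LinearMap.add_apply, hAlt] at h
        linear_combination (a * b) * h
  have skewC : ∀ u v, ΩC u v = - ΩC v u := fun u v =>
    eq_neg_of_add_eq_zero_left (skew0 u v)
  have altC : ∀ u, ΩC u u = 0 := by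
    intro u
    have := skew0 u u
    linear_combination this / 2
  -- the conjugate form
  set Ωb : (ℂ ⊗[ℝ] V) →ₗ[ℂ] (ℂ ⊗[ℝ] V) →ₗ[ℂ] ℂ :=
    LinearMap.mk₂ ℂ (fun u v => star (ΩC (conj u) (conj v)))
      (fun u u' v => by
        rw [map_add, map_add, LinearMap.add_apply, star_add])
      (fun c u v => by
        rw [hconj_smul, map_smul, LinearMap.smul_apply, smul_eq_mul, star_mul', smul_eq_mul]
        simp)
      (fun u v v' => by
        rw [map_add, map_add, star_add])
      (fun c u v => by
        rw [hconj_smul, map_smul, smul_eq_mul, star_mul', smul_eq_mul]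
        simp) with hΩb
  have hΩb_apply : ∀ u v, Ωb u v = star (ΩC (conj u) (conj v)) := fun u v => rfl
  -- kernel
  set K := LinearMap.ker ΩC with hK
  have hker1 : ∀ w ∈ K, ∀ z, ΩC w z = 0 := by
    intro w hw z
    rw [hK, LinearMap.mem_ker] at hw
    rw [hw, LinearMap.zero_apply]
  have hker2 : ∀ w ∈ K, ∀ z, ΩC z w = 0 := by
    intro w hw z
    rw [skewC, hker1 w hw z, neg_zero]
  -- the key vanishing statement
  have key : ∀ w : ℂ ⊗[ℝ] V, w ∈ K → conj w ∈ K → w = 0 := by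
    intro w hw hcw
    by_contra hwne
    set F1 : MultilinearMap ℂ (fun _ : Fin (2 * n) => ℂ ⊗[ℝ] V) ℂ :=
      (MultilinearMap.alternatization (pairMl ΩC n)).toMultilinearMap with hF1
    set F2 : MultilinearMap ℂ (fun _ : Fin (2 * n) => ℂ ⊗[ℝ] V) ℂ :=
      (MultilinearMap.alternatization (pairMl Ωb n)).toMultilinearMap with hF2
    have hF1coe : ⇑F1 = formPow (fun u v => ΩC u v) n := by
      rw [hF1, formPow_eq]
      rfl
    have hF2coe : ⇑F2 = formPow (fun u v => star (ΩC (conj u) (conj v))) n := by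
      rw [hF2,
        show formPow (fun u v => star (ΩC (conj u) (conj v))) n
          = formPow (fun u v => Ωb u v) n from rfl,
        formPow_eq]
      rfl
    have hGcoe : ⇑(MultilinearMap.alternatization (wedgeMl F1 F2))
        = wedgeFun (formPow (fun u v => ΩC u v) n)
            (formPow (fun u v => star (ΩC (conj u) (conj v))) n) := by
      rw [← hF1coe, ← hF2coe, wedgeFun_eq]
    have hvan1 : ∀ (v : Fin (2 * n) → ℂ ⊗[ℝ] V) (t : Fin (2 * n)), v t = w → F1 v = 0 := by
      intro v t hv
      have := formPow_eq_zero ΩC n (hker1 w hw) (hker2 w hw) v t hv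
      rw [← hF1coe] at this
      exact this
    have hvan2 : ∀ (v : Fin (2 * n) → ℂ ⊗[ℝ] V) (t : Fin (2 * n)), v t = w → F2 v = 0 := by
      intro v t hv
      have hb1 : ∀ z, Ωb w z = 0 := by
        intro z
        rw [hΩb_apply, hker1 _ hcw, star_zero]
      have hb2 : ∀ z, Ωb z w = 0 := by
        intro z
        rw [hΩb_apply, hker2 _ hcw, star_zero]
      have := formPow_eq_zero Ωb n hb1 hb2 v t hv
      rw [formPow_eq] at this
      exact this
    have hG0 : MultilinearMap.alternatization (wedgeMl F1 F2) = 0 := by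
      refine alternating_eq_zero (2 * n + 2 * n) (by rw [frC]; omega) _ hwne ?_
      exact fun v t hv => wedge_vanish F1 F2 hvan1 hvan2 v t hv
    apply hvol
    rw [← hGcoe, hG0]
    rfl
  -- conj preserves K-membership facts
  have hinf : (K.restrictScalars ℝ) ⊓ Submodule.map conj (K.restrictScalars ℝ) = ⊥ := by
    rw [Submodule.eq_bot_iff]
    intro u hu
    rw [Submodule.mem_inf] at hu
    obtain ⟨hu1, hu2⟩ := hu
    obtain ⟨w', hw', hwu⟩ := Submodule.mem_map.mp hu2
    have h1 : u ∈ K := hu1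
    have h2 : conj u ∈ K := by
      rw [← hwu, hconj_conj]
      exact hw'
    exact key u h1 h2
  -- conj as a linear equivalence
  have hconjinv : Function.Involutive conj := hconj_conj
  set conjE : (ℂ ⊗[ℝ] V) ≃ₗ[ℝ] (ℂ ⊗[ℝ] V) := LinearEquiv.ofInvolutive conj hconjinv with hconjE
  have hmapfr : Module.finrank ℝ (Submodule.map conj (K.restrictScalars ℝ))
      = Module.finrank ℝ (K.restrictScalars ℝ) := by
    have := LinearEquiv.finrank_map_eq conjE (K.restrictScalars ℝ)
    exact this
  have hKfr : Module.finrank ℝ (K.restrictScalars ℝ) = 2 * Module.finrank ℂ K := by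
    have h1 := Module.finrank_mul_finrank ℝ ℂ K
    rw [Complex.finrank_real_complex] at h1
    exact h1.symm
  -- d ≤ 2n
  set d := Module.finrank ℂ K with hd
  have hsupfr : Module.finrank ℝ
      ((K.restrictScalars ℝ) ⊔ Submodule.map conj (K.restrictScalars ℝ) : Submodule ℝ (ℂ ⊗[ℝ] V))
      = 4 * d := by
    have h1 := Submodule.finrank_sup_add_finrank_inf_eq (K.restrictScalars ℝ)
      (Submodule.map conj (K.restrictScalars ℝ))
    rw [hinf] at h1
    rw [hmapfr, hKfr] at h1
    simp only [finrank_bot] at h1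
    omega
  have hdle : d ≤ 2 * n := by
    have h1 := Submodule.finrank_le
      ((K.restrictScalars ℝ) ⊔ Submodule.map conj (K.restrictScalars ℝ) : Submodule ℝ (ℂ ⊗[ℝ] V))
    rw [hsupfr, frR] at h1
    omega
  -- d ≥ 2n
  have hdge : 2 * n ≤ d := by
    by_contra hlt
    push_neg at hlt
    have hcond : Module.finrank ℂ (LinearMap.ker ΩC) + 2 * (n + 1)
        ≤ Module.finrank ℂ (ℂ ⊗[ℝ] V) + 1 := by
      rw [← hK, ← hd, frC]
      omega
    obtain ⟨e, f, hef, hee, hff⟩ := exists_sympFamily ΩC altC (n + 1) hcond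
    have hfe : ∀ i j, ΩC (f i) (e j) = if i = j then -1 else 0 := by
      intro i j
      rw [skewC, hef]
      by_cases hij : i = j
      · subst hij
        simp
      · rw [if_neg (fun h => hij h.symm), if_neg hij, neg_zero]
    obtain ⟨g, hg⟩ := formPow_sympFamily_ne_zero ΩC (n + 1) e f hef hfe hee hff
    exact hg (congrFun hpow g)
  have hdeq : d = 2 * n := le_antisymm hdle hdge
  have hsup : (K.restrictScalars ℝ) ⊔ Submodule.map conj (K.restrictScalars ℝ) = ⊤ := by
    apply Submodule.eq_top_of_finrank_eq
    rw [hsupfr, frR, hdeq]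
    omega
  have hV0 : ∀ x : V, ((1 : ℂ) ⊗ₜ[ℝ] x) ∈ LinearMap.ker ΩC → x = 0 := by
    intro x hx
    have h1 : conj ((1 : ℂ) ⊗ₜ[ℝ] x) = (1 : ℂ) ⊗ₜ[ℝ] x := by
      rw [hconj_tmul]
      norm_num
    have h2 : (1 : ℂ) ⊗ₜ[ℝ] x = 0 := key _ hx (by rw [h1]; exact hx)
    have h3 := congrArg
      (fun u => (TensorProduct.lid ℝ V) ((TensorProduct.map Complex.reLm LinearMap.id) u)) h2
    simpa using h3
  exact ⟨hdeq, hinf, hsup, hV0⟩
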